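/- Let k ≥ 2 and let G be a graph with κ(G) ≥ k+1. Then dim_{k+1}(G) ≤ dim_k(G)·(1 + 2·5^{dim_k(G)−1}). -/

import Mathlib

open SimpleGraph Function
open scoped Classical

/-- A set `S` is a resolving set of `G`: every pair of distinct vertices differ in
distance to some element of `S`. -/
def IsResolving {V : Type*} (G : SimpleGraph V) (S : Set V) : Prop :=
  ∀ x y : V, x ≠ y → ∃ s ∈ S, G.dist s x ≠ G.dist s y

/-- A fault-tolerant resolving set: removing any single vertex leaves a resolving set. -/
def IsFTResolving {V : Type*} (G : SimpleGraph V) (S : Set V) : Prop :=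
  ∀ s ∈ S, IsResolving G (S \ {s})

/-- The metric dimension of `G`. -/
noncomputable def metricDim {V : Type*} [Fintype V] (G : SimpleGraph V) : ℕ :=
  sInf {n | ∃ S : Finset V, IsResolving G ↑S ∧ S.card = n}

/-- The fault-tolerant metric dimension of `G`. -/
noncomputable def ftDim {V : Type*} [Fintype V] (G : SimpleGraph V) : ℕ :=
  sInf {n | ∃ S : Finset V, IsFTResolving G ↑S ∧ S.card = n}

/-- `S` is a `k`-resolving set: every pair of distinct vertices is distinguished
by at least `k` vertices of `S`. -/
def IsKResolving {V : Type*} [Fintype V] (G : SimpleGraph V) (k : ℕ) (S : Finset V) : Prop :=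
  ∀ x y : V, x ≠ y → k ≤ (S.filter (fun s => G.dist s x ≠ G.dist s y)).card

/-- The `k`-metric dimension of `G`. -/
noncomputable def kMetricDim {V : Type*} [Fintype V] (G : SimpleGraph V) (k : ℕ) : ℕ :=
  sInf {n | ∃ S : Finset V, IsKResolving G k S ∧ S.card = n}

section AuxStmt16
open Finset

lemma descent_aux {V : Type*} {G : SimpleGraph V} (hG : G.Connected) {v x : V}
    (h : 0 < G.dist v x) : ∃ u, G.Adj v u ∧ G.dist u x + 1 = G.dist v x := by
  obtain ⟨p, hp⟩ := hG.exists_walk_length_eq_dist v x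
  cases p with
  | nil => simp at hp; rw [SimpleGraph.dist_self] at h; omega
  | cons hadj q =>
    rename_i u
    refine ⟨u, hadj, ?_⟩
    have h1 : G.dist u x ≤ q.length := SimpleGraph.dist_le q
    have h2 : G.dist v x ≤ G.dist v u + G.dist u x := hG.dist_triangle
    have h3 : G.dist v u ≤ 1 := (SimpleGraph.dist_eq_one_iff_adj.mpr hadj).le
    simp only [Walk.length_cons] at hp
    omega

lemma chainX_aux {V : Type*} {G : SimpleGraph V} (hG : G.Connected) (x y : V) (T : Set V)
    (hcl : ∀ ⦃v u⦄, v ∈ T → G.Adj v u → G.dist u x ≠ G.dist u y → u ∈ T) :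
    ∀ n v, v ∈ T → G.dist v x < G.dist v y → G.dist v x = n → x ∈ T := by
  intro n
  induction n with
  | zero =>
    intro v hv _ h0
    have : v = x := (hG.dist_eq_zero_iff).mp h0
    rwa [this] at hv
  | succ n ih =>
    intro v hv hlt hn
    obtain ⟨u, hadj, hu⟩ := descent_aux hG (x := x) (v := v) (by omega)
    have htri : G.dist v y ≤ G.dist v u + G.dist u y := hG.dist_triangle
    have hvu : G.dist v u ≤ 1 := (SimpleGraph.dist_eq_one_iff_adj.mpr hadj).le
    have hult : G.dist u x < G.dist u y := by omega
    have huT : u ∈ T := hcl hv hadj (Nat.ne_of_lt hult)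
    exact ih u huT hult (by omega)

lemma geo_contra {V : Type*} {G : SimpleGraph V} (hG : G.Connected) (S : Finset V) (x y : V)
    (hxy : x ≠ y) (hyS : y ∈ S)
    (hbad : ∀ v, G.dist v x ≠ G.dist v y → (∃ s ∈ S, G.dist v s ≤ 2) → v ∈ S)
    (hP1 : ∀ v, G.dist v x < G.dist v y → ∀ s ∈ S, ¬ G.dist v s ≤ 2) : False := by
  classical
  set D := G.dist x y with hDdef
  have hD : 0 < D := hG.pos_dist_of_ne hxy
  let f : V → V := fun v => if h : 0 < G.dist v x then Classical.choose (descent_aux hG h) else v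
  have hf : ∀ v, 0 < G.dist v x → G.Adj v (f v) ∧ G.dist (f v) x + 1 = G.dist v x := by
    intro v h
    simp only [f, dif_pos h]
    exact Classical.choose_spec (descent_aux hG h)
  let q : ℕ → V := fun j => f^[j] y
  have hq0 : q 0 = y := rfl
  have hqs : ∀ j, q (j+1) = f (q j) := fun j => Function.iterate_succ_apply' f j y
  have hqx : ∀ j, j ≤ D → G.dist (q j) x = D - j := by
    intro j
    induction j with
    | zero =>
      intro _
      rw [hq0, SimpleGraph.dist_comm]
      omega
    | succ j ih =>
      intro hj
      have hj' : j ≤ D := by omega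
      have h1 := ih hj'
      have hpos : 0 < G.dist (q j) x := by omega
      have h2 := (hf (q j) hpos).2
      rw [hqs j]
      omega
  have hadjq : ∀ j, j < D → G.Adj (q j) (q (j+1)) := by
    intro j hj
    have hpos : 0 < G.dist (q j) x := by have := hqx j (le_of_lt hj); omega
    rw [hqs j]
    exact (hf (q j) hpos).1
  have hstep : ∀ j, G.dist (q (j+1)) (q j) ≤ 1 := by
    intro j
    rw [hqs j]
    by_cases h : 0 < G.dist (q j) x
    · exact (SimpleGraph.dist_eq_one_iff_adj.mpr ((hf _ h).1.symm)).le
    · simp only [f, dif_neg h]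
      rw [SimpleGraph.dist_self]
      omega
  have hqyle : ∀ j, G.dist (q j) y ≤ j := by
    intro j
    induction j with
    | zero => rw [hq0, SimpleGraph.dist_self]
    | succ j ih =>
      have htri : G.dist (q (j+1)) y ≤ G.dist (q (j+1)) (q j) + G.dist (q j) y :=
        hG.dist_triangle
      have := hstep j
      omega
  have hqy : ∀ j, j ≤ D → G.dist (q j) y = j := by
    intro j hj
    have h2 : D ≤ G.dist x (q j) + G.dist (q j) y := hG.dist_triangle
    rw [show G.dist x (q j) = G.dist (q j) x from SimpleGraph.dist_comm, hqx j hj] at h2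
    have := hqyle j
    omega
  set P : ℕ → Prop := fun j => 2*j < D ∧ q j ∈ S with hPdef
  set js := Nat.findGreatest P D with hjs
  have hP0 : P 0 := ⟨by omega, by rw [hq0]; exact hyS⟩
  obtain ⟨h2j, hjS⟩ : P js := Nat.findGreatest_spec (Nat.zero_le D) hP0
  have hjD : js ≤ D := Nat.findGreatest_le D
  rcases lt_trichotomy (2*(js+1)) D with hlt | heq | hgt
  · have hj1 : js + 1 ≤ D := by omega
    have hygt : G.dist (q (js+1)) y < G.dist (q (js+1)) x := by
      rw [hqx _ hj1, hqy _ hj1]; omega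
    have hmem : q (js+1) ∈ S := by
      refine hbad _ (Ne.symm (Nat.ne_of_lt hygt)) ⟨q js, hjS, ?_⟩
      have := hstep js
      omega
    exact Nat.findGreatest_is_greatest (P := P) (by omega) hj1 ⟨by omega, hmem⟩
  · have hj2 : js + 2 ≤ D := by omega
    have hx2 : G.dist (q (js+2)) x < G.dist (q (js+2)) y := by
      rw [hqx _ hj2, hqy _ hj2]; omega
    refine hP1 _ hx2 (q js) hjS ?_
    have ha : G.dist (q (js+2)) (q (js+1)) ≤ 1 := hstep (js+1)
    have hb := hstep js
    have htri : G.dist (q (js+2)) (q js) ≤ G.dist (q (js+2)) (q (js+1)) + G.dist (q (js+1)) (q js) :=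
      hG.dist_triangle
    omega
  · have hj1 : js + 1 ≤ D := by omega
    have hx1 : G.dist (q (js+1)) x < G.dist (q (js+1)) y := by
      rw [hqx _ hj1, hqy _ hj1]; omega
    refine hP1 _ hx1 (q js) hjS ?_
    have := hstep js
    omega

lemma far_contra {V : Type*} {G : SimpleGraph V} (hG : G.Connected) (S : Finset V) (x y : V)
    (hxy : x ≠ y)
    (hbad : ∀ v, G.dist v x ≠ G.dist v y → (∃ s ∈ S, G.dist v s ≤ 2) → v ∈ S)
    (hxfar : ∀ s ∈ S, ¬ G.dist x s ≤ 2)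
    (hs1 : ∃ s ∈ S, G.dist s x ≠ G.dist s y) : False := by
  classical
  have hxS : x ∉ S := fun h => hxfar x h (by rw [SimpleGraph.dist_self]; omega)
  -- S is closed under chain steps
  have hclS : ∀ ⦃v u : V⦄, v ∈ (↑S : Set V) → G.Adj v u → G.dist u x ≠ G.dist u y →
      u ∈ (↑S : Set V) := by
    intro v u hv hadj hne
    have h1 : G.dist u v ≤ 2 := by
      have := (SimpleGraph.dist_eq_one_iff_adj.mpr hadj.symm).le
      omega
    exact hbad u hne ⟨v, hv, h1⟩
  have hclS' : ∀ ⦃v u : V⦄, v ∈ (↑S : Set V) → G.Adj v u → G.dist u y ≠ G.dist u x →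
      u ∈ (↑S : Set V) := fun v u hv hadj hne => hclS hv hadj (Ne.symm hne)
  have hnox : ∀ v ∈ S, G.dist v x < G.dist v y → False := by
    intro v hv hlt
    exact hxS (chainX_aux hG x y (↑S) hclS (G.dist v x) v hv hlt rfl)
  -- y is in S
  obtain ⟨s1, hs1S, hs1ne⟩ := hs1
  have hyS : y ∈ S := by
    rcases Nat.lt_or_ge (G.dist s1 x) (G.dist s1 y) with h | h
    · exact absurd (hnox s1 hs1S h) id
    · have hlt : G.dist s1 y < G.dist s1 x := by omega
      exact chainX_aux hG y x (↑S) hclS' (G.dist s1 y) s1 hs1S hlt rfl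
  have hP1 : ∀ v, G.dist v x < G.dist v y → ∀ s ∈ S, ¬ G.dist v s ≤ 2 := by
    intro v hlt s hsS hle
    exact hnox v (hbad v (Nat.ne_of_lt hlt) ⟨s, hsS, hle⟩) hlt
  exact geo_contra hG S x y hxy hyS hbad hP1

lemma ball_resolving {V : Type*} [Fintype V] {G : SimpleGraph V} (hG : G.Connected)
    (S S₀ : Finset V) (k : ℕ)
    (hk1 : 1 ≤ k) (hS : IsKResolving G k S) (hS₀ : IsKResolving G (k+1) S₀) :
    IsKResolving G (k+1) (S.biUnion fun s => Finset.univ.filter fun u => G.dist u s ≤ 2) := by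
  classical
  intro x y hxy
  by_contra hcon
  push_neg at hcon
  set S' := S.biUnion fun s => Finset.univ.filter fun u => G.dist u s ≤ 2 with hS'def
  set P : V → Prop := fun s => G.dist s x ≠ G.dist s y with hPdef
  have hcon2 : (S'.filter P).card < k + 1 := hcon
  have hsub : S ⊆ S' := by
    intro s hs
    rw [hS'def, Finset.mem_biUnion]
    exact ⟨s, hs, Finset.mem_filter.mpr ⟨Finset.mem_univ _, by rw [SimpleGraph.dist_self]; omega⟩⟩
  have hfsub : S.filter P ⊆ S'.filter P := Finset.filter_subset_filter _ hsub
  have hkS : k ≤ (S.filter P).card := hS x y hxy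
  have hcard' : (S'.filter P).card ≤ (S.filter P).card := by omega
  have heq : S.filter P = S'.filter P := Finset.eq_of_subset_of_card_le hfsub hcard'
  have hbad : ∀ v, G.dist v x ≠ G.dist v y → (∃ s ∈ S, G.dist v s ≤ 2) → v ∈ S := by
    rintro v hne ⟨s, hsS, hle⟩
    have hv' : v ∈ S' :=
      Finset.mem_biUnion.mpr ⟨s, hsS, Finset.mem_filter.mpr ⟨Finset.mem_univ _, hle⟩⟩
    have hv2 : v ∈ S'.filter P := Finset.mem_filter.mpr ⟨hv', hne⟩
    rw [← heq] at hv2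
    exact (Finset.mem_filter.mp hv2).1
  have hW : k + 1 ≤ (Finset.univ.filter P).card :=
    le_trans (hS₀ x y hxy)
      (Finset.card_le_card (Finset.filter_subset_filter _ (Finset.subset_univ _)))
  have hw : ∃ w, P w ∧ w ∉ S' := by
    by_contra hc
    push_neg at hc
    have hsub2 : Finset.univ.filter P ⊆ S'.filter P := by
      intro w hwmem
      obtain ⟨-, hPw⟩ := Finset.mem_filter.mp hwmem
      exact Finset.mem_filter.mpr ⟨hc w hPw, hPw⟩
    have := Finset.card_le_card hsub2
    omega
  obtain ⟨w, hPw, hwS'⟩ := hw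
  have hwfar : ∀ s ∈ S, ¬ G.dist w s ≤ 2 := by
    intro s hsS hle
    exact hwS' (Finset.mem_biUnion.mpr ⟨s, hsS, Finset.mem_filter.mpr ⟨Finset.mem_univ _, hle⟩⟩)
  set T : Set V := {v | ∀ s ∈ S, ¬ G.dist v s ≤ 2} with hTdef
  have hclT : ∀ ⦃v u : V⦄, v ∈ T → G.Adj v u → G.dist u x ≠ G.dist u y → u ∈ T := by
    intro v u hv hadj hne s hsS hle
    have huS : u ∈ S := hbad u hne ⟨s, hsS, hle⟩
    have hd : G.dist v u ≤ 2 := by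
      have := (SimpleGraph.dist_eq_one_iff_adj.mpr hadj).le
      omega
    exact hv u huS hd
  have hclT' : ∀ ⦃v u : V⦄, v ∈ T → G.Adj v u → G.dist u y ≠ G.dist u x → u ∈ T :=
    fun v u hv hadj hne => hclT hv hadj (Ne.symm hne)
  have hs1 : ∃ s ∈ S, G.dist s x ≠ G.dist s y := by
    have hpos : 0 < (S.filter P).card := by omega
    obtain ⟨s, hsmem⟩ := Finset.card_pos.mp hpos
    obtain ⟨h1, h2⟩ := Finset.mem_filter.mp hsmem
    exact ⟨s, h1, h2⟩
  rcases Nat.lt_or_ge (G.dist w x) (G.dist w y) with h | h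
  · have hxT : x ∈ T := chainX_aux hG x y T hclT (G.dist w x) w hwfar h rfl
    exact far_contra hG S x y hxy hbad hxT hs1
  · have hlt : G.dist w y < G.dist w x := by
      have hne : G.dist w x ≠ G.dist w y := hPw
      omega
    have hyT : y ∈ T := chainX_aux hG y x T hclT' (G.dist w y) w hwfar hlt rfl
    refine far_contra hG S y x (Ne.symm hxy) ?_ hyT ?_
    · exact fun v hne hex => hbad v (Ne.symm hne) hex
    · obtain ⟨s, h1, h2⟩ := hs1
      exact ⟨s, h1, Ne.symm h2⟩

lemma ball_card {V : Type*} [Fintype V] {G : SimpleGraph V} (hG : G.Connected)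
    (S : Finset V) (k : ℕ) (hk1 : 1 ≤ k) (hS : IsKResolving G k S) {s : V} (hs : s ∈ S) :
    (Finset.univ.filter fun u => G.dist u s ≤ 2).card ≤ 1 + 2 * 5 ^ (S.card - 1) := by
  classical
  set A := Finset.univ.filter fun u => 1 ≤ G.dist u s ∧ G.dist u s ≤ 2 with hA
  have hsub : (Finset.univ.filter fun u => G.dist u s ≤ 2) ⊆ insert s A := by
    intro u hu
    obtain ⟨-, hle⟩ := Finset.mem_filter.mp hu
    rcases Nat.eq_zero_or_pos (G.dist u s) with h0 | hpos
    · exact Finset.mem_insert.mpr (Or.inl ((hG.dist_eq_zero_iff).mp h0))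
    · exact Finset.mem_insert.mpr
        (Or.inr (Finset.mem_filter.mpr ⟨Finset.mem_univ _, hpos, hle⟩))
  have h1 : (Finset.univ.filter fun u => G.dist u s ≤ 2).card ≤ 1 + A.card := by
    refine le_trans (Finset.card_le_card hsub) ?_
    refine le_trans (Finset.card_insert_le _ _) (by omega)
  set tgt := (Finset.Icc 1 2) ×ˢ
      ((S.erase s).pi fun t => Finset.Icc (G.dist t s - 2) (G.dist t s + 2)) with htgt
  have hmap : A.card ≤ tgt.card := by
    refine Finset.card_le_card_of_injOn
      (fun u => (G.dist u s, fun t (_ : t ∈ S.erase s) => G.dist t u)) ?_ ?_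
    · intro u hu
      obtain ⟨-, h1u, h2u⟩ := Finset.mem_filter.mp hu
      rw [htgt, Finset.mem_coe, Finset.mem_product]
      refine ⟨Finset.mem_Icc.mpr ⟨h1u, h2u⟩, ?_⟩
      rw [Finset.mem_pi]
      intro t ht
      rw [Finset.mem_Icc]
      show G.dist t s - 2 ≤ G.dist t u ∧ G.dist t u ≤ G.dist t s + 2
      have htu : G.dist t u ≤ G.dist t s + G.dist s u := hG.dist_triangle
      have hts : G.dist t s ≤ G.dist t u + G.dist u s := hG.dist_triangle
      have hcomm : G.dist s u = G.dist u s := SimpleGraph.dist_comm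
      constructor <;> omega
    · intro u hu u' hu' hfe
      by_contra hne
      have hfil := hS u u' hne
      have hpos : 0 < (S.filter fun w => G.dist w u ≠ G.dist w u').card := by omega
      obtain ⟨wd, hwmem⟩ := Finset.card_pos.mp hpos
      obtain ⟨hwS, hwne⟩ := Finset.mem_filter.mp hwmem
      have hfst : G.dist u s = G.dist u' s := congrArg Prod.fst hfe
      have hsnd := congrArg Prod.snd hfe
      by_cases hws : wd = s
      · subst hws
        refine hwne ?_
        rw [show G.dist wd u = G.dist u wd from SimpleGraph.dist_comm,
          show G.dist wd u' = G.dist u' wd from SimpleGraph.dist_comm, hfst]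
      · have hwmem' : wd ∈ S.erase s := Finset.mem_erase.mpr ⟨hws, hwS⟩
        exact hwne (congrFun (congrFun hsnd wd) hwmem')
  have hcard : tgt.card ≤ 2 * 5 ^ (S.card - 1) := by
    rw [htgt, Finset.card_product, Finset.card_pi]
    have h2 : (Finset.Icc (1:ℕ) 2).card = 2 := by rw [Nat.card_Icc]
    rw [h2]
    have hprod : (∏ t ∈ S.erase s, (Finset.Icc (G.dist t s - 2) (G.dist t s + 2)).card)
        ≤ 5 ^ (S.erase s).card := by
      refine Finset.prod_le_pow_card _ _ _ ?_
      intro t ht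
      rw [Nat.card_Icc]
      omega
    rw [Finset.card_erase_of_mem hs] at hprod
    omega
  omega

end AuxStmt16

theorem stmt16 {V : Type*} [Fintype V] (G : SimpleGraph V) (hG : G.Connected)
    (k : ℕ) (hk : 2 ≤ k)
    (hκ : ∃ S : Finset V, IsKResolving G (k + 1) S) :
    kMetricDim G (k + 1) ≤
      kMetricDim G k * (1 + 2 * 5 ^ (kMetricDim G k - 1)) := by
  classical
  obtain ⟨S₀, hS₀⟩ := hκ
  have hS₀k : IsKResolving G k S₀ := fun x y h => le_trans (Nat.le_succ k) (hS₀ x y h)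
  have hne : {n | ∃ S : Finset V, IsKResolving G k S ∧ S.card = n}.Nonempty :=
    ⟨S₀.card, S₀, hS₀k, rfl⟩
  have hmem : kMetricDim G k ∈ {n | ∃ S : Finset V, IsKResolving G k S ∧ S.card = n} :=
    Nat.sInf_mem hne
  obtain ⟨S, hS, hScard⟩ := hmem
  have hk1 : 1 ≤ k := by omega
  set S' := S.biUnion fun s => Finset.univ.filter fun u => G.dist u s ≤ 2 with hS'def
  have hres : IsKResolving G (k+1) S' := ball_resolving hG S S₀ k hk1 hS hS₀
  have h1 : kMetricDim G (k+1) ≤ S'.card := Nat.sInf_le ⟨S', hres, rfl⟩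
  have h2 : S'.card ≤ S.card * (1 + 2 * 5 ^ (S.card - 1)) := by
    refine le_trans Finset.card_biUnion_le ?_
    refine le_trans (Finset.sum_le_card_nsmul S _ (1 + 2 * 5 ^ (S.card - 1)) ?_) ?_
    · intro s hsmem
      exact ball_card hG S k hk1 hS hsmem
    · rw [smul_eq_mul]
  rw [hScard] at h2
  exact le_trans h1 h2
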